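/- Assume the Filter Dichotomy: for every uniform filter F on ℕ which is nonmeager as a subset of the Cantor space P(ω), there is a finite-to-one function h : ℕ → ℕ such that {h[x] : x ∈ F} is an ultrafilter on ℕ. Then every uniform filter on ℕ which is a universally measurable subset of P(ω) is meager. -/

import Mathlib

open MeasureTheory Set

/-- Identify a subset of ℕ with a point of the Cantor space `ℕ → Bool`. -/
noncomputable def toCantor (x : Set ℕ) : ℕ → Bool :=
  fun n => @decide (n ∈ x) (Classical.dec _)

/-- A subset of a topological space is universally measurable if it is measurable with
respect to (the completion of) every σ-finite Borel measure on the space. -/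
def UMSet {X : Type*} [TopologicalSpace X] (A : Set X) : Prop :=
  letI : MeasurableSpace X := borel X
  ∀ μ : Measure X, SigmaFinite μ → NullMeasurableSet A μ

/-- A (proper, set-theoretic) filter on ℕ. -/
def IsSetFilter (F : Set (Set ℕ)) : Prop :=
  Set.univ ∈ F ∧ ∅ ∉ F ∧ (∀ x ∈ F, ∀ y : Set ℕ, x ⊆ y → y ∈ F) ∧
    (∀ x ∈ F, ∀ y ∈ F, x ∩ y ∈ F)

/-- A uniform filter on ℕ: a filter containing all cofinite sets. -/
def IsUniformFilter (F : Set (Set ℕ)) : Prop :=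
  IsSetFilter F ∧ ∀ x : Set ℕ, xᶜ.Finite → x ∈ F

/-- An ultrafilter on ℕ. -/
def IsUltrafilterSet (G : Set (Set ℕ)) : Prop :=
  IsSetFilter G ∧ ∀ x : Set ℕ, x ∈ G ∨ xᶜ ∈ G

/-- The family `{h[x] : x ∈ F}` of images of members of `F` under `h`. -/
def imgFam (h : ℕ → ℕ) (F : Set (Set ℕ)) : Set (Set ℕ) :=
  (fun x : Set ℕ => h '' x) '' F

/-- `h` is finite-to-one if every fiber is finite. -/
def FinToOne (h : ℕ → ℕ) : Prop := ∀ n : ℕ, (h ⁻¹' {n}).Finite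

/-- The Filter Dichotomy: every uniform nonmeager filter on ℕ is mapped by a finite-to-one
function to an ultrafilter. -/
def FilterDichotomy : Prop :=
  ∀ F : Set (Set ℕ), IsUniformFilter F → ¬ IsMeagre (toCantor '' F) →
    ∃ h : ℕ → ℕ, FinToOne h ∧ IsUltrafilterSet (imgFam h F)

/-- The Filter Dichotomy implies that universally measurable uniform filters on ℕ
are meager. -/
abbrev Om : Type := ℕ → ZMod 2

noncomputable def muH : Measure Om :=
  Measure.addHaarMeasure ⟨⟨Set.univ, isCompact_univ⟩, by simp⟩

lemma muH_univ : muH Set.univ = 1 := Measure.addHaarMeasure_self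

instance : IsProbabilityMeasure muH := ⟨muH_univ⟩

instance : muH.IsAddLeftInvariant := by unfold muH; infer_instance

lemma muH_preimage (d : Om) (s : Set Om) : muH ((fun ω => d + ω) ⁻¹' s) = muH s :=
  measure_preimage_add muH d s

lemma muH_mp (d : Om) : MeasurePreserving (fun ω => d + ω : Om → Om) muH muH :=
  ⟨measurable_const_add d, Measure.IsAddLeftInvariant.map_add_left_eq_self d⟩

open MeasureTheory in
lemma atom_const (B : Set Om)
    (hB : ∀ d : Om, (Function.support d).Finite → (fun ω => d + ω) ⁻¹' B =ᵐ[muH] B)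
    (t : Finset ℕ) (g g' : (i : t) → ZMod 2) :
    muH (B ∩ cylinder t ({g} : Set ((i : t) → ZMod 2))) =
      muH (B ∩ cylinder t ({g'} : Set ((i : t) → ZMod 2))) := by
  classical
  set d : Om := fun i => if h : i ∈ t then g' ⟨i, h⟩ - g ⟨i, h⟩ else 0 with hd
  have hsupp : (Function.support d).Finite := by
    apply Set.Finite.subset t.finite_toSet
    intro i hi
    simp only [Function.mem_support, hd] at hi
    by_contra h
    exact hi (dif_neg h)
  have hcyl : (fun ω => d + ω) ⁻¹' (cylinder t ({g'} : Set ((i : t) → ZMod 2))) = cylinder t ({g} : Set ((i : t) → ZMod 2)) := by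
    ext ω
    simp only [cylinder, Set.mem_preimage, Set.mem_singleton_iff, funext_iff]
    have key : ∀ a b c : ZMod 2, a - b + c = a ↔ c = b := by decide
    constructor
    · intro H i
      have := H i
      simp only [Finset.restrict, Pi.add_apply, hd, dif_pos i.2] at this ⊢
      exact (key _ _ _).mp this
    · intro H i
      have := H i
      simp only [Finset.restrict, Pi.add_apply, hd, dif_pos i.2] at this ⊢
      rw [this]; exact (key _ _ _).mpr rfl
  calc muH (B ∩ cylinder t ({g} : Set ((i : t) → ZMod 2)))
      = muH ((fun ω => d + ω) ⁻¹' B ∩ cylinder t ({g} : Set ((i : t) → ZMod 2))) :=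
        (measure_congr ((hB d hsupp).inter Filter.EventuallyEq.rfl)).symm
    _ = muH ((fun ω => d + ω) ⁻¹' (B ∩ cylinder t ({g'} : Set ((i : t) → ZMod 2)))) := by
        rw [Set.preimage_inter, hcyl]
    _ = muH (B ∩ cylinder t ({g'} : Set ((i : t) → ZMod 2))) := muH_preimage _ _

open MeasureTheory in
lemma cyl_decomp (t : Finset ℕ) (C : Set Om) (hCm : MeasurableSet C)
    (hC : ∀ d : Om, (Function.support d).Finite → (fun ω => d + ω) ⁻¹' C =ᵐ[muH] C)
    (S : Set ((i : t) → ZMod 2)) :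
    muH (C ∩ cylinder t S)
      = Nat.card S • muH (C ∩ cylinder t ({fun _ => 0} : Set ((i : t) → ZMod 2))) := by
  classical
  have hdecomp : C ∩ cylinder t S = ⋃ g : S, (C ∩ cylinder t ({g.1} : Set ((i : t) → ZMod 2))) := by
    ext ω
    simp [cylinder]
  have hdisj : Pairwise (Function.onFun Disjoint
      fun g : S => C ∩ cylinder t ({g.1} : Set ((i : t) → ZMod 2))) := by
    intro g g' hgg'
    apply Set.disjoint_left.mpr
    intro ω hω hω'
    apply hgg'
    apply Subtype.coe_injective
    have h1 : t.restrict ω = g.1 := hω.2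
    have h2 : t.restrict ω = g'.1 := hω'.2
    exact h1.symm.trans h2
  have hmeas : ∀ g : S, MeasurableSet (C ∩ cylinder t ({g.1} : Set ((i : t) → ZMod 2))) := by
    intro g
    exact hCm.inter (MeasurableSet.cylinder t (measurableSet_singleton _))
  rw [hdecomp, measure_iUnion hdisj hmeas]
  have hconst : ∀ g : S, muH (C ∩ cylinder t ({g.1} : Set ((i : t) → ZMod 2)))
      = muH (C ∩ cylinder t ({fun _ => 0} : Set ((i : t) → ZMod 2))) := fun g =>
    atom_const C hC t g.1 (fun _ => 0)
  haveI : Fintype ↥S := Set.Finite.fintype (Set.toFinite S)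
  rw [tsum_congr hconst, tsum_fintype, Finset.sum_const, Finset.card_univ,
    ← Nat.card_eq_fintype_card]

open MeasureTheory in
lemma zero_one (B : Set Om) (hBm : MeasurableSet B)
    (hB : ∀ d : Om, (Function.support d).Finite → (fun ω => d + ω) ⁻¹' B =ᵐ[muH] B) :
    muH B = 0 ∨ muH B = 1 := by
  classical
  have huniv_inv : ∀ d : Om, (Function.support d).Finite →
      (fun ω => d + ω) ⁻¹' (Set.univ : Set Om) =ᵐ[muH] Set.univ := by
    intro d _
    rw [Set.preimage_univ]; exact Filter.EventuallyEq.rfl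
  have hprod : ∀ s ∈ measurableCylinders (fun _ : ℕ => ZMod 2),
      muH (B ∩ s) = muH B * muH s := by
    intro s hs
    obtain ⟨t, S, hSm, rfl⟩ := (mem_measurableCylinders s).mp hs
    have h1 := cyl_decomp t B hBm hB S
    have h2 := cyl_decomp t Set.univ MeasurableSet.univ huniv_inv S
    have h3 := cyl_decomp t B hBm hB (Set.univ : Set ((i : t) → ZMod 2))
    have h4 := cyl_decomp t Set.univ MeasurableSet.univ huniv_inv
      (Set.univ : Set ((i : t) → ZMod 2))
    simp only [Set.univ_inter] at h2 h4
    rw [cylinder_univ, Set.inter_univ] at h3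
    rw [cylinder_univ, muH_univ] at h4
    rw [h1, h2, h3]
    simp only [nsmul_eq_mul] at h4 ⊢
    rw [show ∀ w x y z : ENNReal, (w * x) * (y * z) = (w * z) * (y * x) from
      fun w x y z => by ring, ← h4, one_mul]
  have hgen : (inferInstance : MeasurableSpace Om)
      = MeasurableSpace.generateFrom (measurableCylinders fun _ : ℕ => ZMod 2) :=
    generateFrom_measurableCylinders.symm
  have hext : muH.restrict B = muH B • muH := by
    refine ext_of_generate_finite _ hgen isPiSystem_measurableCylinders ?_ ?_
    · intro s hs
      rw [Measure.restrict_apply' hBm, Set.inter_comm, hprod s hs, Measure.smul_apply,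
        smul_eq_mul]
    · rw [Measure.restrict_apply' hBm, Set.univ_inter, Measure.smul_apply, smul_eq_mul,
        muH_univ, mul_one]
  have key : muH B = muH B * muH B := by
    have h := congrArg (fun ν : Measure Om => ν B) hext
    simpa [Measure.restrict_apply' hBm, Set.inter_self] using h
  rcases eq_or_ne (muH B) 0 with h0 | h0
  · exact Or.inl h0
  · right
    have htop : muH B ≠ ⊤ := measure_ne_top muH B
    have : muH B * 1 = muH B * muH B := by rw [mul_one]; exact key
    exact ((ENNReal.mul_right_inj h0 htop).mp this).symm

open MeasureTheory in
lemma not_nullmeasurable (A : Set Om)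
    (hinv : ∀ d : Om, (Function.support d).Finite → (fun ω => d + ω) ⁻¹' A = A)
    (hc : (fun ω => (fun _ => (1 : ZMod 2)) + ω) ⁻¹' A = Aᶜ) :
    ¬ NullMeasurableSet A muH := by
  intro hnm
  obtain ⟨B, hBsub, hBm, hBeq⟩ := hnm.exists_measurable_subset_ae_eq
  -- hBeq : B =ᵐ[muH] A
  have hqmp : ∀ d : Om, Measure.QuasiMeasurePreserving (fun ω => d + ω) muH muH :=
    fun d => (muH_mp d).quasiMeasurePreserving
  have hBinv : ∀ d : Om, (Function.support d).Finite →
      (fun ω => d + ω) ⁻¹' B =ᵐ[muH] B := by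
    intro d hd
    have h1 : (fun ω => d + ω) ⁻¹' B =ᵐ[muH] (fun ω => d + ω) ⁻¹' A :=
      (hqmp d).preimage_ae_eq hBeq
    rw [hinv d hd] at h1
    exact h1.trans hBeq.symm
  have hAB : muH A = muH B := (measure_congr hBeq).symm
  have hAc : muH Aᶜ = muH A := by
    rw [← hc]; exact muH_preimage _ _
  have hAcB : muH Aᶜ = muH Bᶜ := measure_congr hBeq.compl.symm
  have hBc : muH Bᶜ = 1 - muH B := by
    rw [measure_compl hBm (measure_ne_top muH B), muH_univ]
  rcases zero_one B hBm hBinv with h0 | h1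
  · have : (1 : ENNReal) = 0 := by
      calc (1 : ENNReal) = 1 - muH B := by rw [h0]; simp
      _ = muH Bᶜ := hBc.symm
      _ = muH Aᶜ := hAcB.symm
      _ = muH A := hAc
      _ = muH B := hAB
      _ = 0 := h0
    exact one_ne_zero this
  · have : (1 : ENNReal) = 0 := by
      calc (1 : ENNReal) = muH B := h1.symm
      _ = muH A := hAB.symm
      _ = muH Aᶜ := hAc.symm
      _ = muH Bᶜ := hAcB
      _ = 1 - muH B := hBc
      _ = 0 := by rw [h1]; simp
    exact one_ne_zero this

theorem stmt_6 (FD : FilterDichotomy) :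
    ∀ F : Set (Set ℕ), IsUniformFilter F → UMSet (toCantor '' F) →
      IsMeagre (toCantor '' F) := by
  intro F hF hUM
  by_contra hmeag
  obtain ⟨h, hfin, hultra⟩ := FD F hF hmeag
  obtain ⟨⟨huniv, hempty, hup, hinter⟩, hcof⟩ := hF
  have hGfilter := hultra.1
  have hmemG : ∀ y : Set ℕ, y ∈ imgFam h F ↔ h ⁻¹' y ∈ F := by
    intro y
    constructor
    · rintro ⟨x, hx, rfl⟩
      exact hup x hx _ (Set.subset_preimage_image h x)
    · intro hy
      have hmem : h '' (h ⁻¹' y) ∈ imgFam h F := ⟨_, hy, rfl⟩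
      exact hGfilter.2.2.1 _ hmem y (Set.image_preimage_subset h y)
  have hpre_fin : ∀ s : Set ℕ, s.Finite → (h ⁻¹' s).Finite := by
    intro s hs
    have hrw : h ⁻¹' s = ⋃ n ∈ s, h ⁻¹' {n} := by ext; simp
    rw [hrw]
    exact Set.Finite.biUnion hs (fun n _ => hfin n)
  have hdiff : ∀ x ∈ F, ∀ y : Set ℕ, (x \ y).Finite → y ∈ F := by
    intro x hx y hxy
    have h1 : (x \ y)ᶜ ∈ F := hcof _ (by rwa [compl_compl])
    have h2 : x ∩ (x \ y)ᶜ ∈ F := hinter x hx _ h1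
    refine hup _ h2 y ?_
    rintro n ⟨hnx, hnd⟩
    by_contra hny
    exact hnd ⟨hnx, hny⟩
  set A : Set Om := {ω : Om | h ⁻¹' {n | ω n = 1} ∈ F} with hA
  have hinvA : ∀ d : Om, (Function.support d).Finite → (fun ω => d + ω) ⁻¹' A = A := by
    intro d hd
    have key : ∀ ω : Om, (h ⁻¹' {n | (d + ω) n = 1} ∈ F) ↔ (h ⁻¹' {n | ω n = 1} ∈ F) := by
      intro ω
      have hfin2 : (h ⁻¹' (Function.support d)).Finite := hpre_fin _ hd
      have hsub : ∀ s t : Set ℕ, (s \ t ⊆ Function.support d) →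
          (h ⁻¹' s \ h ⁻¹' t).Finite := by
        intro s t hst
        rw [← Set.preimage_diff]
        exact hfin2.subset (Set.preimage_mono hst)
      have hd1 : {n | (d + ω) n = 1} \ {n | ω n = 1} ⊆ Function.support d := by
        rintro n ⟨h1, h2⟩
        by_contra hns
        have hd0 : d n = 0 := Function.notMem_support.mp hns
        have : (d + ω) n = ω n := by simp [hd0]
        exact h2 (by rw [Set.mem_setOf_eq, ← this]; exact h1)
      have hd2 : {n | ω n = 1} \ {n | (d + ω) n = 1} ⊆ Function.support d := by
        rintro n ⟨h1, h2⟩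
        by_contra hns
        have hd0 : d n = 0 := Function.notMem_support.mp hns
        have : (d + ω) n = ω n := by simp [hd0]
        exact h2 (by rw [Set.mem_setOf_eq, this]; exact h1)
      constructor
      · intro hmem
        exact hdiff _ hmem _ (hsub _ _ hd1)
      · intro hmem
        exact hdiff _ hmem _ (hsub _ _ hd2)
    ext ω
    simpa [hA] using key ω
  have hcomplA : (fun ω => (fun _ => (1 : ZMod 2)) + ω) ⁻¹' A = Aᶜ := by
    ext ω
    have hset : {n | (((fun _ => (1 : ZMod 2)) : Om) + ω) n = 1} = {n | ω n = 1}ᶜ := by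
      ext n
      simp only [Pi.add_apply, Set.mem_setOf_eq, Set.mem_compl_iff]
      exact (by decide : ∀ a : ZMod 2, 1 + a = 1 ↔ ¬(a = 1)) _
    simp only [Set.mem_preimage, hA, Set.mem_setOf_eq, Set.mem_compl_iff, hset]
    rw [Set.preimage_compl]
    constructor
    · intro h1 h2
      have h3 := hinter _ h1 _ h2
      rw [Set.compl_inter_self] at h3
      exact hempty h3
    · intro h1
      rcases hultra.2 {n | ω n = 1} with hy | hy
      · exact absurd ((hmemG _).mp hy) h1
      · have hmem := (hmemG _).mp hy
        rwa [Set.preimage_compl] at hmem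
  -- universal measurability transfer
  set ψ : Om → (ℕ → Bool) := fun ω m => decide (ω (h m) = 1) with hψ
  have hψcont : Continuous ψ := continuous_pi fun m => by
    have hcomp : (fun ω : Om => decide (ω (h m) = 1)) =
        (fun a : ZMod 2 => decide (a = 1)) ∘ (fun ω : Om => ω (h m)) := rfl
    show Continuous fun ω : Om => decide (ω (h m) = 1)
    rw [hcomp]
    exact Continuous.comp continuous_of_discreteTopology (continuous_apply (h m))
  letI mB : MeasurableSpace (ℕ → Bool) := borel (ℕ → Bool)
  haveI : BorelSpace (ℕ → Bool) := ⟨rfl⟩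
  have hψmeas : Measurable ψ := hψcont.measurable
  set μ' : Measure (ℕ → Bool) := muH.map ψ with hμ'
  haveI : IsFiniteMeasure μ' := Measure.isFiniteMeasure_map muH ψ
  have hnull : NullMeasurableSet (toCantor '' F) μ' := hUM μ' inferInstance
  have hAeq : A = ψ ⁻¹' (toCantor '' F) := by
    ext ω
    simp only [Set.mem_preimage, hA, Set.mem_setOf_eq]
    constructor
    · intro hmem
      refine ⟨_, hmem, ?_⟩
      funext m
      exact decide_eq_decide.mpr Iff.rfl
    · rintro ⟨x, hx, hxeq⟩
      have hxeq' : x = h ⁻¹' {n | ω n = 1} := by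
        ext m
        exact decide_eq_decide.mp (congrFun hxeq m)
      rwa [← hxeq']
  have hnmA : NullMeasurableSet A muH := by
    rw [hAeq]
    exact hnull.preimage ⟨hψmeas, Measure.AbsolutelyContinuous.rfl⟩
  exact not_nullmeasurable A hinvA hcomplA hnmA
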